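/- arXiv:2411.07178 — 4 statements merged into one kernel-verified Lean document; each statement's English description precedes it below -/
import Mathlib

section
/- (Chebyshev equioscillation, sufficiency) Let f ∈ C[0,1] and p a polynomial of degree at most n with A = ‖f − p‖. If there exist n+2 points 0 ≤ t₀ < t₁ < ⋯ < t_{n+1} ≤ 1 and ε ∈ {1,−1} such that f(tᵢ) − p(tᵢ) = ε·A·(−1)ⁱ for i = 0,…,n+1, then p is a best uniform approximation to f from polynomials of degree ≤ n. -/
/-- The subspace `𝒫ₙ ⊆ C[0,1]` of (restrictions of) real polynomials of degree `≤ n`. -/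
def Pn (n : ℕ) : Set C(Set.Icc (0 : ℝ) 1, ℝ) :=
  {g | ∃ p : Polynomial ℝ, p.natDegree ≤ n ∧ ∀ t : Set.Icc (0 : ℝ) 1, g t = p.eval (t : ℝ)}

/-- Chebyshev equioscillation (sufficiency): if `f − p` attains `±‖f − p‖` with
alternating signs at `n+2` increasing points of `[0,1]`, then `p ∈ 𝒫ₙ` is a best
uniform approximation to `f` from `𝒫ₙ`. -/
theorem stmt_10 (n : ℕ) (f p : C(Set.Icc (0 : ℝ) 1, ℝ)) (hp : p ∈ Pn n)
    (A : ℝ) (hA : A = ‖f - p‖)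
    (t : Fin (n + 2) → Set.Icc (0 : ℝ) 1) (hmono : StrictMono fun i => (t i : ℝ))
    (ε : ℝ) (hε : ε = 1 ∨ ε = -1)
    (hosc : ∀ i : Fin (n + 2), f (t i) - p (t i) = ε * A * (-1) ^ (i : ℕ)) :
    ∀ q ∈ Pn n, ‖f - p‖ ≤ ‖f - q‖ := by
  intro q hq
  by_contra hcon
  push_neg at hcon
  obtain ⟨P, hPdeg, hPeval⟩ := hp
  obtain ⟨Q, hQdeg, hQeval⟩ := hq
  set R : Polynomial ℝ := P - Q with hR
  have hRdeg : R.natDegree ≤ n :=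
    le_trans (Polynomial.natDegree_sub_le P Q) (max_le hPdeg hQdeg)
  have hε2 : ε * ε = 1 := by rcases hε with h | h <;> simp [h]
  have hAq : ‖f - q‖ < A := by rw [hA]; exact hcon
  have hReval : ∀ x : Set.Icc (0:ℝ) 1, R.eval (x : ℝ) = p x - q x := by
    intro x
    simp [hR, Polynomial.eval_sub, ← hPeval x, ← hQeval x]
  -- sign fact
  have hsign : ∀ i : Fin (n + 2), ε * (-1) ^ (i : ℕ) * R.eval ((t i : ℝ)) < 0 := by
    intro i
    have h1 : R.eval ((t i : ℝ)) = (f (t i) - q (t i)) - ε * A * (-1) ^ (i : ℕ) := by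
      rw [hReval (t i), ← hosc i]; ring
    have h2 : |f (t i) - q (t i)| ≤ ‖f - q‖ := by
      have := (f - q).norm_coe_le_norm (t i)
      simpa [Real.norm_eq_abs] using this
    have h3 : |f (t i) - q (t i)| < A := lt_of_le_of_lt h2 hAq
    have h4 : ε * (-1) ^ (i : ℕ) * (f (t i) - q (t i)) < A := by
      calc ε * (-1) ^ (i : ℕ) * (f (t i) - q (t i))
          ≤ |ε * (-1) ^ (i : ℕ) * (f (t i) - q (t i))| := le_abs_self _
        _ = |f (t i) - q (t i)| := by
            rw [abs_mul, abs_mul]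
            rcases hε with h | h <;> simp [h, abs_pow]
        _ < A := h3
    have hsq : ((-1:ℝ)) ^ (i : ℕ) * (-1) ^ (i : ℕ) = 1 := by
      rw [← pow_add]; exact (neg_one_pow_eq_one_iff_even (by norm_num)).2 ⟨_, rfl⟩
    have h5 : ε * (-1) ^ (i : ℕ) * R.eval ((t i : ℝ)) =
        ε * (-1) ^ (i : ℕ) * (f (t i) - q (t i)) -
          (ε * ε) * ((-1) ^ (i : ℕ) * (-1) ^ (i : ℕ)) * A := by
      rw [h1]; ring
    rw [hε2, hsq] at h5
    linarith [h4, h5.le, h5.ge]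
  -- roots between consecutive points
  have hroot : ∀ i : Fin (n + 1), ∃ c : ℝ,
      c ∈ Set.Ioo ((t i.castSucc : ℝ)) ((t i.succ : ℝ)) ∧ R.eval c = 0 := by
    intro i
    have hle : ((t i.castSucc : ℝ)) ≤ ((t i.succ : ℝ)) :=
      (hmono (Fin.castSucc_lt_succ (i := i))).le
    have hcont : ContinuousOn (fun x => R.eval x)
        (Set.Icc ((t i.castSucc : ℝ)) ((t i.succ : ℝ))) :=
      (Polynomial.continuous R).continuousOn
    have hi1 := hsign i.castSucc
    have hi2 := hsign i.succ
    have hc1 : (i.castSucc : ℕ) = (i : ℕ) := rfl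
    have hc2 : (i.succ : ℕ) = (i : ℕ) + 1 := rfl
    rw [hc1] at hi1; rw [hc2] at hi2
    have hsq : ((-1:ℝ)) ^ (i : ℕ) * (-1) ^ (i : ℕ) = 1 := by
      rw [← pow_add]; exact (neg_one_pow_eq_one_iff_even (by norm_num)).2 ⟨_, rfl⟩
    have hi2' : ε * (-1) ^ (i : ℕ) * R.eval ((t i.succ : ℝ)) > 0 := by
      rw [pow_succ] at hi2; nlinarith [hi2]
    have hprod : R.eval ((t i.castSucc : ℝ)) * R.eval ((t i.succ : ℝ)) < 0 := by
      have key : (ε * (-1) ^ (i : ℕ) * R.eval ((t i.castSucc : ℝ))) *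
          (ε * (-1) ^ (i : ℕ) * R.eval ((t i.succ : ℝ))) =
          (ε * ε) * ((-1) ^ (i : ℕ) * (-1) ^ (i : ℕ)) *
            (R.eval ((t i.castSucc : ℝ)) * R.eval ((t i.succ : ℝ))) := by ring
      rw [hε2, hsq, one_mul, one_mul] at key
      rw [← key]
      exact mul_neg_of_neg_of_pos hi1 hi2'
    rcases mul_neg_iff.1 hprod with ⟨h1, h2⟩ | ⟨h1, h2⟩
    · have : (0:ℝ) ∈ Set.Ioo (R.eval ((t i.succ : ℝ))) (R.eval ((t i.castSucc : ℝ))) := ⟨h2, h1⟩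
      obtain ⟨c, hc, hc0⟩ := intermediate_value_Ioo' hle hcont this
      exact ⟨c, hc, hc0⟩
    · have : (0:ℝ) ∈ Set.Ioo (R.eval ((t i.castSucc : ℝ))) (R.eval ((t i.succ : ℝ))) := ⟨h1, h2⟩
      obtain ⟨c, hc, hc0⟩ := intermediate_value_Ioo hle hcont this
      exact ⟨c, hc, hc0⟩
  choose c hcmem hc0 using hroot
  have hcmono : StrictMono c := by
    intro i j hij
    have h1 : c i < (t i.succ : ℝ) := (hcmem i).2
    have h2 : ((t j.castSucc : ℝ)) < c j := (hcmem j).1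
    have h3 : ((t i.succ : ℝ)) ≤ ((t j.castSucc : ℝ)) := by
      apply hmono.monotone
      have : (i.succ : ℕ) ≤ (j.castSucc : ℕ) := by
        simp only [Fin.val_succ, Fin.coe_castSucc]
        exact hij
      exact this
    linarith
  have hR0 : R = 0 := by
    apply Polynomial.eq_zero_of_natDegree_lt_card_of_eval_eq_zero R hcmono.injective hc0
    simpa using Nat.lt_succ_of_le hRdeg
  have := hsign 0
  rw [hR0] at this
  simp at this
end

section
/- Let f ∈ C[0,1] with p = P_{𝒫ₙ}(f), and let μ, γ ∈ C*[0,1] (regular signed Borel measures on [0,1]). If μ([0,1]) ≠ γ([0,1]), then γ does not belong to the Fréchet (Mordukhovich regular) coderivative D̂*P_{𝒫ₙ}(f)(μ). -/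
/-- `inCoderiv P f μ φ` says that `φ` belongs to the Fréchet (regular Mordukhovich)
coderivative `D̂*P(f)(μ)` of the single-valued map `P` at `f`:
`limsup_{g→f, g≠f} (⟨φ, g−f⟩ − ⟨μ, P(g)−P(f)⟩)/(‖g−f‖+‖P(g)−P(f)‖) ≤ 0`. -/
def inCoderiv (P : C(Set.Icc (0 : ℝ) 1, ℝ) → C(Set.Icc (0 : ℝ) 1, ℝ))
    (f : C(Set.Icc (0 : ℝ) 1, ℝ))
    (μ φ : StrongDual ℝ C(Set.Icc (0 : ℝ) 1, ℝ)) : Prop :=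
  Filter.limsup
    (fun g => (φ (g - f) - μ (P g - P f)) / (‖g - f‖ + ‖P g - P f‖))
    (nhdsWithin f {f}ᶜ) ≤ 0

namespace Stmt16Aux

abbrev X := C(Set.Icc (0 : ℝ) 1, ℝ)

/-- A base point of `[0,1]`. -/
def pt : Set.Icc (0 : ℝ) 1 := ⟨0, by constructor <;> norm_num⟩

/-- The continuous map on `[0,1]` induced by a polynomial. -/
def polyMap (p : Polynomial ℝ) : X :=
  ⟨fun t => p.eval (t : ℝ), p.continuous.comp continuous_subtype_val⟩

lemma polyMap_apply (p : Polynomial ℝ) (t : Set.Icc (0:ℝ) 1) :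
    polyMap p t = p.eval (t : ℝ) := rfl

/-- Improvement lemma: if `q` has the same (strict) sign as `h` at every extremal
point of `h`, then a small step `h - l•q` has norm `< ‖h‖`. -/
lemma improve (h q : X) (d : ℝ) (hd : ‖h‖ = d) (hdpos : 0 < d)
    (hsign : ∀ t, |h t| = d → 0 < h t * q t) :
    ∃ l : ℝ, 0 < l ∧ ‖h - l • q‖ < d := by
  -- the set where the sign condition fails
  set A : Set (Set.Icc (0:ℝ) 1) := {t | h t * q t ≤ 0} with hA
  have hAclosed : IsClosed A := isClosed_le (h.continuous.mul q.continuous) continuous_const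
  have habs : ∀ t, |h t| ≤ d := by
    intro t
    have := h.norm_coe_le_norm t
    rwa [Real.norm_eq_abs, hd] at this
  obtain ⟨δ, hδpos, hδle, hδd⟩ :
      ∃ δ : ℝ, 0 < δ ∧ (∀ t ∈ A, |h t| ≤ d - δ) ∧ δ ≤ d := by
    rcases A.eq_empty_or_nonempty with hAe | hAne
    · exact ⟨d, hdpos, fun t ht => by simp [hAe] at ht, le_refl d⟩
    · obtain ⟨t0, ht0A, ht0⟩ :=
        (hAclosed.isCompact).exists_isMaxOn hAne
          ((continuous_abs.comp h.continuous).continuousOn)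
      have ht0lt : |h t0| < d := by
        rcases lt_or_eq_of_le (habs t0) with hlt | heq
        · exact hlt
        · exact absurd (hsign t0 heq) (not_lt.mpr ht0A)
      refine ⟨d - |h t0|, by linarith, fun t ht => by
        have h5 : |h t| ≤ |h t0| := ht0 ht
        linarith, ?_⟩
      have : 0 ≤ |h t0| := abs_nonneg _
      linarith
  set l : ℝ := δ / (2 * (‖q‖ + 1)) with hl
  have hqnn : (0:ℝ) ≤ ‖q‖ := norm_nonneg _
  have hlpos : 0 < l := by positivity
  have hlq : l * ‖q‖ < δ / 2 := by
    rw [hl, div_mul_eq_mul_div, div_lt_iff₀ (by positivity)]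
    nlinarith
  refine ⟨l, hlpos, ?_⟩
  rw [(ContinuousMap.norm_lt_iff _ hdpos)]
  intro t
  have hqt : |q t| ≤ ‖q‖ := by
    have := q.norm_coe_le_norm t; rwa [Real.norm_eq_abs] at this
  have happ : (h - l • q) t = h t - l * q t := by
    simp [ContinuousMap.sub_apply, ContinuousMap.smul_apply, smul_eq_mul]
  rw [happ, Real.norm_eq_abs]
  by_cases htA : t ∈ A
  · -- bad set: |h t| ≤ d - δ and the correction is < δ/2
    have h1 : |h t| ≤ d - δ := hδle t htA
    have h2 : |l * q t| < δ / 2 := by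
      rw [abs_mul, abs_of_pos hlpos]
      calc l * |q t| ≤ l * ‖q‖ := by nlinarith [abs_nonneg (q t)]
        _ < δ / 2 := hlq
    have habs3 : |h t - l * q t| ≤ |h t| + |l * q t| := by
      have h6 := abs_add_le (h t) (-(l * q t))
      rwa [abs_neg, ← sub_eq_add_neg] at h6
    calc |h t - l * q t| ≤ |h t| + |l * q t| := habs3
      _ < (d - δ) + δ / 2 := by linarith
      _ < d := by linarith
  · -- good set: same strict sign
    have hpos : 0 < h t * q t := lt_of_not_ge htA
    have h1 : |h t| ≤ d := habs t
    have h2 : |l * q t| < d := by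
      rw [abs_mul, abs_of_pos hlpos]
      calc l * |q t| ≤ l * ‖q‖ := by nlinarith [abs_nonneg (q t)]
        _ < δ / 2 := hlq
        _ < d := by linarith
    rcases mul_pos_iff.mp hpos with ⟨ha, hb⟩ | ⟨ha, hb⟩
    · -- h t > 0, q t > 0
      rw [abs_lt]
      constructor
      · have : l * q t < d := by
          have := (abs_lt.mp h2).2; linarith
        nlinarith
      · have := abs_le.mp h1
        nlinarith
    · -- h t < 0, q t < 0
      rw [abs_lt]
      constructor
      · have := abs_le.mp h1
        nlinarith
      · have : -(l * q t) < d := by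
          have := (abs_lt.mp h2).1; linarith
        nlinarith

/-- Uniqueness of the best approximation from `Pn n`. -/
lemma best_unique {n : ℕ} (g p1 p2 : X) (h1 : p1 ∈ Pn n) (h2 : p2 ∈ Pn n)
    (b1 : ∀ r ∈ Pn n, ‖g - p1‖ ≤ ‖g - r‖) (b2 : ∀ r ∈ Pn n, ‖g - p2‖ ≤ ‖g - r‖) :
    p1 = p2 := by
  obtain ⟨P1, hP1, e1⟩ := h1
  obtain ⟨P2, hP2, e2⟩ := h2
  set d : ℝ := ‖g - p1‖ with hdd
  have hd2 : ‖g - p2‖ = d := le_antisymm (b2 p1 ⟨P1, hP1, e1⟩) (b1 p2 ⟨P2, hP2, e2⟩)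
  by_contra hne
  have hd0 : 0 < d := by
    rw [hdd, norm_pos_iff, sub_ne_zero]
    intro hgp1
    apply hne
    have h2 : ‖g - p2‖ = 0 := by rw [hd2, hdd, hgp1, sub_self, norm_zero]
    have h3 : g = p2 := sub_eq_zero.mp (norm_eq_zero.mp h2)
    rw [← hgp1, h3]
  -- midpoint
  set M : Polynomial ℝ := Polynomial.C (2⁻¹ : ℝ) * (P1 + P2) with hM
  set m : X := (2⁻¹ : ℝ) • (p1 + p2) with hm
  have hMdeg : M.natDegree ≤ n :=
    le_trans (Polynomial.natDegree_C_mul_le _ _)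
      (le_trans (Polynomial.natDegree_add_le _ _) (max_le hP1 hP2))
  have hmapp : ∀ t, m t = 2⁻¹ * (p1 t + p2 t) := fun t => rfl
  have hmval : ∀ t, m t = M.eval (t : ℝ) := by
    intro t
    rw [hmapp t, e1 t, e2 t, hM]
    simp [Polynomial.eval_mul, Polynomial.eval_add, Polynomial.eval_C]
  have hmPn : m ∈ Pn n := ⟨M, hMdeg, hmval⟩
  set h : X := g - m with hh
  have hht : ∀ t, h t = 2⁻¹ * ((g - p1) t + (g - p2) t) := by
    intro t
    have h7 : h t = g t - m t := rfl
    have h8 : (g - p1) t = g t - p1 t := rfl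
    have h9 : (g - p2) t = g t - p2 t := rfl
    rw [h7, h8, h9, hmapp t]; ring
  have hnorm_le : ‖h‖ ≤ d := by
    rw [ContinuousMap.norm_le _ (le_of_lt hd0)]
    intro t
    have ha := (g - p1).norm_coe_le_norm t
    have hb := (g - p2).norm_coe_le_norm t
    rw [Real.norm_eq_abs, ← hdd] at ha
    rw [Real.norm_eq_abs, hd2] at hb
    rw [Real.norm_eq_abs, hht t]
    have habs4 := abs_add_le ((g - p1) t) ((g - p2) t)
    have ha1 := abs_le.mp ha
    have hb1 := abs_le.mp hb
    rw [abs_mul, show |(2⁻¹:ℝ)| = 2⁻¹ by norm_num]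
    have := abs_le.mp (le_trans (le_of_eq rfl) (habs4.trans (by linarith : |(g - p1) t| + |(g - p2) t| ≤ 2*d)))
    nlinarith [abs_nonneg ((g - p1) t + (g - p2) t)]
  have hnorm : ‖h‖ = d := le_antisymm hnorm_le (b1 m hmPn)
  -- the difference polynomial
  set r : Polynomial ℝ := P1 - P2 with hr
  have hr0 : r ≠ 0 := by
    intro h0
    apply hne
    have hPeq : P1 = P2 := sub_eq_zero.mp h0
    ext t; rw [e1 t, e2 t, hPeq]
  -- extremal points are roots of r
  have hroot : ∀ t : Set.Icc (0:ℝ) 1, |h t| = d → r.IsRoot (t : ℝ) := by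
    intro t ht
    have ha : |(g - p1) t| ≤ d := by
      have := (g - p1).norm_coe_le_norm t
      rwa [Real.norm_eq_abs, ← hdd] at this
    have hb : |(g - p2) t| ≤ d := by
      have := (g - p2).norm_coe_le_norm t
      rwa [Real.norm_eq_abs, hd2] at this
    have hab : |(g - p1) t + (g - p2) t| = 2 * d := by
      have h10 := ht
      rw [hht t, abs_mul, show |(2⁻¹ : ℝ)| = 2⁻¹ by norm_num] at h10
      linarith
    have heq : (g - p1) t = (g - p2) t := by
      rcases (abs_eq (by linarith : (0:ℝ) ≤ 2 * d)).mp hab with hc | hc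
      · have := abs_le.mp ha; have := abs_le.mp hb; linarith
      · have := abs_le.mp ha; have := abs_le.mp hb; linarith
    have h8 : (g - p1) t = g t - p1 t := rfl
    have h9 : (g - p2) t = g t - p2 t := rfl
    have : p1 t = p2 t := by rw [h8, h9] at heq; linarith
    have : P1.eval (t : ℝ) = P2.eval (t : ℝ) := by rw [← e1 t, ← e2 t]; exact this
    simp [Polynomial.IsRoot, hr, Polynomial.eval_sub, this]
  -- interpolation nodes: the (finitely many) roots of r
  set s : Finset ℝ := r.roots.toFinset with hs
  have hscard : s.card ≤ n := by
    calc s.card ≤ Multiset.card r.roots := r.roots.toFinset_card_le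
      _ ≤ r.natDegree := Polynomial.card_roots' r
      _ ≤ n := le_trans (Polynomial.natDegree_sub_le _ _) (max_le hP1 hP2)
  set F : ℝ → ℝ := fun x => if hx : x ∈ Set.Icc (0:ℝ) 1 then h ⟨x, hx⟩ else 0 with hF
  have hinj : Set.InjOn (id : ℝ → ℝ) s := fun _ _ _ _ hxy => hxy
  set Q : Polynomial ℝ := Lagrange.interpolate s id F with hQ
  have hQdeg : Q.natDegree ≤ n := by
    by_cases h0 : Q = 0
    · simp [h0]
    · have hlt : Q.degree < (s.card : ℕ) := Lagrange.degree_interpolate_lt _ hinj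
      have := (Polynomial.natDegree_lt_iff_degree_lt h0).mpr hlt
      omega
  set q : X := polyMap Q with hq
  have hqPn : q ∈ Pn n := ⟨Q, hQdeg, fun t => rfl⟩
  have hsign : ∀ t, |h t| = d → 0 < h t * q t := by
    intro t ht
    have hroott := hroot t ht
    have hmem : (t : ℝ) ∈ s := by
      rw [hs, Multiset.mem_toFinset, Polynomial.mem_roots hr0]
      exact hroott
    have hqeq : q t = h t := by
      have h11 := Lagrange.eval_interpolate_at_node F hinj hmem
      simp only [id_eq] at h11
      rw [hq, polyMap_apply, hQ, h11, hF]
      simp [t.2]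
    rw [hqeq]
    have hht : h t ≠ 0 := by
      intro h0; rw [h0] at ht; simp at ht; linarith
    exact mul_self_pos.mpr hht
  obtain ⟨l, hlpos, hlt⟩ := improve h q d hnorm hd0 hsign
  -- the improved element of Pn n
  have hmem : m + l • q ∈ Pn n := by
    refine ⟨M + Polynomial.C l * Q, ?_, ?_⟩
    · exact le_trans (Polynomial.natDegree_add_le _ _)
        (max_le hMdeg (le_trans (Polynomial.natDegree_C_mul_le _ _) hQdeg))
    · intro t
      simp [ContinuousMap.add_apply, ContinuousMap.smul_apply, hmval t, hq, polyMap_apply,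
        Polynomial.eval_add, Polynomial.eval_mul, Polynomial.eval_C, smul_eq_mul]
  have hkey : g - (m + l • q) = h - l • q := by rw [hh]; abel
  have := b1 (m + l • q) hmem
  rw [hkey] at this
  linarith

/-- Norm of a constant multiple of one. -/
lemma norm_smul_one (c : ℝ) : ‖c • (1 : X)‖ = |c| := by
  apply le_antisymm
  · rw [ContinuousMap.norm_le _ (abs_nonneg c)]
    intro t
    have : (c • (1 : X)) t = c := by
      simp [ContinuousMap.smul_apply, smul_eq_mul]
    rw [this, Real.norm_eq_abs]
  · have h1 := (c • (1 : X)).norm_coe_le_norm pt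
    have h2 : (c • (1 : X)) pt = c := by
      simp [ContinuousMap.smul_apply, smul_eq_mul]
    rwa [h2, Real.norm_eq_abs] at h1

/-- One in `C([0,1],ℝ)` has norm one. -/
lemma norm_one_X : ‖(1 : X)‖ = 1 := by
  apply le_antisymm
  · rw [ContinuousMap.norm_le _ zero_le_one]
    intro t; simp
  · have := (1 : X).norm_coe_le_norm pt
    simpa using this

/-- Constants in `Pn`. -/
lemma translate_mem_Pn {n : ℕ} {r : X} (hr : r ∈ Pn n) (c : ℝ) : r + c • 1 ∈ Pn n := by
  obtain ⟨p, hp, hval⟩ := hr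
  refine ⟨p + Polynomial.C c, ?_, ?_⟩
  · exact le_trans (Polynomial.natDegree_add_le _ _)
      (max_le hp (by simp [Polynomial.natDegree_C]))
  · intro t
    simp [ContinuousMap.add_apply, ContinuousMap.smul_apply, hval t, smul_eq_mul]

/-- The projection commutes with adding constants. -/
lemma proj_translate {n : ℕ} (P : X → X)
    (hP : ∀ g, P g ∈ Pn n ∧ ∀ r ∈ Pn n, ‖g - P g‖ ≤ ‖g - r‖) (f : X) (c : ℝ) :
    P (f + c • 1) = P f + c • 1 := by
  refine best_unique (f + c • 1) (P (f + c • 1)) (P f + c • 1)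
    (hP _).1 (translate_mem_Pn (hP f).1 c) (hP _).2 ?_
  intro r hr
  have h1 : f + c • 1 - (P f + c • 1) = f - P f := by abel
  have h2 : f + c • 1 - r = f - (r + (-c) • 1) := by
    ext t; simp [ContinuousMap.sub_apply, ContinuousMap.add_apply, ContinuousMap.smul_apply]
    ring
  rw [h1, h2]
  exact (hP f).2 _ (translate_mem_Pn hr (-c))

end Stmt16Aux

open Stmt16Aux in
/-- Let `P` be the metric projection of `C[0,1]` onto `𝒫ₙ` and `μ, γ ∈ C*[0,1]`.
If `μ([0,1]) ≠ γ([0,1])` (pairings with the constant function 1 differ), then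
`γ ∉ D̂*P(f)(μ)`. -/
theorem stmt_16 (n : ℕ) (P : C(Set.Icc (0 : ℝ) 1, ℝ) → C(Set.Icc (0 : ℝ) 1, ℝ))
    (hP : ∀ g, P g ∈ Pn n ∧ ∀ r ∈ Pn n, ‖g - P g‖ ≤ ‖g - r‖)
    (f : C(Set.Icc (0 : ℝ) 1, ℝ))
    (μ γ : StrongDual ℝ C(Set.Icc (0 : ℝ) 1, ℝ))
    (hne : μ (1 : C(Set.Icc (0 : ℝ) 1, ℝ)) ≠ γ (1 : C(Set.Icc (0 : ℝ) 1, ℝ))) :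
    ¬ inCoderiv P f μ γ := by
  intro hcod
  set δ : ℝ := γ (1 : X) - μ (1 : X) with hδdef
  have hδ : δ ≠ 0 := sub_ne_zero.mpr (Ne.symm hne)
  set u : X → ℝ :=
    fun g => (γ (g - f) - μ (P g - P f)) / (‖g - f‖ + ‖P g - P f‖) with hu
  set c : ℕ → ℝ := fun k => δ / ((k : ℝ) + 1) with hc
  have hcne : ∀ k, c k ≠ 0 := fun k => by
    rw [hc]; positivity
  set g : ℕ → X := fun k => f + (c k) • 1 with hg
  -- value along the sequence
  have hval : ∀ k, u (g k) = |δ| / 2 := by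
    intro k
    have h1 : g k - f = (c k) • (1 : X) := by
      show f + (c k) • (1 : X) - f = (c k) • (1 : X)
      exact add_sub_cancel_left f _
    have h2 : P (g k) - P f = (c k) • (1 : X) := by
      show P (f + (c k) • (1 : X)) - P f = (c k) • (1 : X)
      rw [proj_translate P hP f (c k)]
      exact add_sub_cancel_left (P f) _
    have hγ : γ ((c k) • (1 : X)) = c k * γ (1 : X) := by
      rw [map_smul]; rfl
    have hμ : μ ((c k) • (1 : X)) = c k * μ (1 : X) := by
      rw [map_smul]; rfl
    have hnorm : ‖(c k) • (1 : X)‖ = |c k| := norm_smul_one (c k)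
    have hck : 0 < (k : ℝ) + 1 := by positivity
    have hcabs : |c k| = |δ| / ((k : ℝ) + 1) := by
      rw [hc, abs_div, abs_of_pos hck]
    have hcd : c k * δ = |c k| * |δ| := by
      rw [hcabs, hc]
      rw [div_mul_eq_mul_div, div_mul_eq_mul_div, abs_mul_abs_self]
    rw [hu]
    simp only [h1, h2, hγ, hμ, hnorm]
    rw [show c k * γ (1:X) - c k * μ (1:X) = c k * δ by rw [hδdef]; ring]
    rw [hcd]
    have habsne : |c k| ≠ 0 := abs_ne_zero.mpr (hcne k)
    field_simp
    ring
  -- the sequence tends to f within the punctured neighborhood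
  have htend : Filter.Tendsto g Filter.atTop (nhdsWithin f {f}ᶜ) := by
    apply tendsto_nhdsWithin_of_tendsto_nhds_of_eventually_within
    · have h1 : Filter.Tendsto (fun k : ℕ => ((k : ℝ) + 1)) Filter.atTop Filter.atTop :=
        Filter.tendsto_atTop_add_const_right _ 1 tendsto_natCast_atTop_atTop
      have h2 : Filter.Tendsto (fun k : ℕ => ((k : ℝ) + 1)⁻¹) Filter.atTop (nhds 0) :=
        h1.inv_tendsto_atTop
      have h3 : Filter.Tendsto c Filter.atTop (nhds 0) := by
        have h2' := h2.const_mul δ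
        rw [mul_zero] at h2'
        exact h2'.congr fun k => (div_eq_mul_inv δ _).symm
      have h4 : Filter.Tendsto (fun k => (c k) • (1 : X)) Filter.atTop (nhds ((0:ℝ) • (1:X))) :=
        h3.smul_const _
      rw [zero_smul] at h4
      have h5 := (tendsto_const_nhds (x := f) (f := Filter.atTop (α := ℕ))).add h4
      rw [add_zero] at h5
      exact h5
    · apply Filter.Eventually.of_forall
      intro k
      simp only [Set.mem_compl_iff, Set.mem_singleton_iff]
      intro hgf
      have : g k pt = f pt := by rw [hgf]
      rw [hg] at this
      simp [ContinuousMap.add_apply, ContinuousMap.smul_apply] at this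
      exact hcne k this
  -- frequently the quotient equals |δ|/2
  have hfreq : ∃ᶠ x in nhdsWithin f {f}ᶜ, |δ| / 2 ≤ u x :=
    htend.frequently (Filter.Frequently.of_forall fun k => (hval k).ge)
  -- boundedness of the quotient
  have hbdd : Filter.IsBoundedUnder (· ≤ ·) (nhdsWithin f {f}ᶜ) u := by
    apply Filter.isBoundedUnder_of_eventually_le (a := ‖γ‖ + ‖μ‖)
    filter_upwards [self_mem_nhdsWithin] with x hx
    have hxf : x ≠ f := hx
    have hD : 0 < ‖x - f‖ + ‖P x - P f‖ := by
      have h1 : 0 < ‖x - f‖ := norm_pos_iff.mpr (sub_ne_zero.mpr hxf)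
      have h2 : 0 ≤ ‖P x - P f‖ := norm_nonneg _
      linarith
    rw [hu, div_le_iff₀ hD]
    have h1 : γ (x - f) ≤ ‖γ‖ * ‖x - f‖ :=
      le_trans (le_abs_self _) (by rw [← Real.norm_eq_abs]; exact γ.le_opNorm _)
    have h2 : -(μ (P x - P f)) ≤ ‖μ‖ * ‖P x - P f‖ := by
      have := μ.le_opNorm (P x - P f)
      rw [Real.norm_eq_abs] at this
      have := neg_abs_le (μ (P x - P f))
      nlinarith [abs_nonneg (μ (P x - P f)), (μ.le_opNorm (P x - P f))]
    have hγn : 0 ≤ ‖γ‖ := ContinuousLinearMap.opNorm_nonneg γ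
    have hμn : 0 ≤ ‖μ‖ := ContinuousLinearMap.opNorm_nonneg μ
    nlinarith [norm_nonneg (x - f), norm_nonneg (P x - P f)]
  have hle : |δ| / 2 ≤ Filter.limsup u (nhdsWithin f {f}ᶜ) :=
    Filter.le_limsup_of_frequently_le hfreq hbdd
  have habs : 0 < |δ| := abs_pos.mpr hδ
  have : Filter.limsup u (nhdsWithin f {f}ᶜ) ≤ 0 := hcod
  linarith
end

section
/- Let f ∈ C[0,1] with p = P_{𝒫ₙ}(f), and let γ ∈ C*[0,1] satisfy ⟨γ, f − p⟩ < 0. Then for every μ ∈ C*[0,1], γ does not belong to the regular coderivative D̂*P_{𝒫ₙ}(f)(μ). -/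
open Filter Polynomial Set

lemma norm_attained (h : C(Set.Icc (0:ℝ) 1, ℝ)) :
    ∃ x, ‖h‖ = |h x| ∧ ∀ y, |h y| ≤ |h x| := by
  have hne : Nonempty (Set.Icc (0:ℝ) 1) := ⟨⟨0, by norm_num⟩⟩
  obtain ⟨x, -, hx⟩ := isCompact_univ.exists_isMaxOn Set.univ_nonempty
    ((map_continuous h).abs.continuousOn)
  have hmax : ∀ y, |h y| ≤ |h x| := fun y => hx (mem_univ y)
  refine ⟨x, le_antisymm ?_ ?_, hmax⟩
  · exact (ContinuousMap.norm_le _ (abs_nonneg _)).mpr fun y => by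
      simpa [Real.norm_eq_abs] using hmax y
  · simpa [Real.norm_eq_abs] using h.norm_coe_le_norm x

lemma abs_apply_le (h : C(Set.Icc (0:ℝ) 1, ℝ)) (x : Set.Icc (0:ℝ) 1) : |h x| ≤ ‖h‖ := by
  simpa [Real.norm_eq_abs] using h.norm_coe_le_norm x

lemma norm_smul' (c : ℝ) (h : C(Set.Icc (0:ℝ) 1, ℝ)) : ‖c • h‖ = |c| * ‖h‖ := by
  have := norm_smul c h
  rwa [Real.norm_eq_abs] at this

lemma best_unique (n : ℕ) (g p r : C(Set.Icc (0:ℝ) 1, ℝ))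
    (hp : p ∈ Pn n) (hr : r ∈ Pn n)
    (hbp : ∀ q ∈ Pn n, ‖g - p‖ ≤ ‖g - q‖) (hbr : ∀ q ∈ Pn n, ‖g - r‖ ≤ ‖g - q‖) :
    p = r := by
  set d := ‖g - p‖ with hd
  have hdr : ‖g - r‖ = d := le_antisymm (hbr p hp) (hbp r hr)
  rcases eq_or_lt_of_le (norm_nonneg (g - p)) with h0 | hdpos
  · have h1 : g = p := sub_eq_zero.mp (norm_eq_zero.mp h0.symm)
    have h2 : g = r := sub_eq_zero.mp (norm_eq_zero.mp (hdr.trans h0.symm))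
    rw [← h1, ← h2]
  by_contra hne
  obtain ⟨P1, hP1n, hP1⟩ := hp
  obtain ⟨P2, hP2n, hP2⟩ := hr
  have hP12 : P1 ≠ P2 := by
    intro hEq
    exact hne (ContinuousMap.ext fun x => by rw [hP1 x, hP2 x, hEq])
  set q0 : Polynomial ℝ := P1 - P2 with hq0
  have hq0ne : q0 ≠ 0 := sub_ne_zero.mpr hP12
  have hq0deg : q0.natDegree ≤ n := le_trans (natDegree_sub_le _ _) (max_le hP1n hP2n)
  -- midpoint
  set Pm : Polynomial ℝ := Polynomial.C (2⁻¹ : ℝ) * (P1 + P2) with hPm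
  have hPmdeg : Pm.natDegree ≤ n := le_trans (natDegree_C_mul_le _ _)
    (le_trans (natDegree_add_le _ _) (max_le hP1n hP2n))
  set m : C(Set.Icc (0:ℝ) 1, ℝ) := (2⁻¹ : ℝ) • (p + r) with hm
  have hmeval : ∀ x : Set.Icc (0:ℝ) 1, m x = Pm.eval (x : ℝ) := by
    intro x
    simp only [hm, ContinuousMap.smul_apply, ContinuousMap.add_apply, smul_eq_mul, hPm,
      eval_mul, eval_C, eval_add, hP1 x, hP2 x]
  have hmmem : m ∈ Pn n := ⟨Pm, hPmdeg, hmeval⟩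
  have hgm : ‖g - m‖ = d := by
    apply le_antisymm
    · refine (ContinuousMap.norm_le _ (norm_nonneg (g - p))).mpr fun x => ?_
      have h1 : |(g - p) x| ≤ d := abs_apply_le (g - p) x
      have h2 : |(g - r) x| ≤ d := hdr ▸ abs_apply_le (g - r) x
      have h3 : (g - m) x = 2⁻¹ * ((g - p) x + (g - r) x) := by
        simp [hm]; ring
      rw [Real.norm_eq_abs, h3]
      have h4 : |2⁻¹ * ((g - p) x + (g - r) x)| ≤ 2⁻¹ * (|(g - p) x| + |(g - r) x|) := by
        rw [abs_mul, abs_of_pos (by norm_num : (0:ℝ) < 2⁻¹)]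
        exact mul_le_mul_of_nonneg_left (abs_add_le _ _) (by norm_num)
      linarith
    · exact hbp m hmmem
  -- points where |g-m| attains d are roots of q0
  have key : ∀ x : Set.Icc (0:ℝ) 1, |(g - m) x| = d → q0.eval (x : ℝ) = 0 := by
    intro x hx
    have ha : |(g - p) x| ≤ d := by rw [hd]; exact abs_apply_le _ x
    have hb : |(g - r) x| ≤ d := by rw [← hdr]; exact abs_apply_le _ x
    have hsum : (g - m) x = 2⁻¹ * ((g - p) x + (g - r) x) := by
      simp [hm]; ring
    set a := (g - p) x
    set b := (g - r) x
    have hab : |a + b| = 2 * d := by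
      have : |2⁻¹ * (a + b)| = d := by rw [← hsum]; exact hx
      rw [abs_mul, abs_of_pos (by norm_num : (0:ℝ) < 2⁻¹)] at this
      linarith
    have ha1 := abs_le.mp ha
    have hb1 := abs_le.mp hb
    have haeqb : a = b := by
      rcases (abs_eq (by linarith : (0:ℝ) ≤ 2*d)).mp hab with h | h <;> linarith [ha1.1, ha1.2, hb1.1, hb1.2]
    have hpr : p x = r x := by
      have : g x - p x = g x - r x := by
        simpa [a, b] using haeqb
      linarith
    have heq : eval (x:ℝ) P1 = eval (x:ℝ) P2 := by rw [← hP1 x, ← hP2 x]; exact hpr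
    simp [hq0, eval_sub, heq]
  have hdpos' : 0 < d := hdpos
  classical
  set Z : Finset ℝ := q0.roots.toFinset with hZ
  have hmemZ : ∀ x : Set.Icc (0:ℝ) 1, |(g - m) x| = d → (x:ℝ) ∈ Z := by
    intro x hx
    rw [hZ, Multiset.mem_toFinset, mem_roots hq0ne]
    exact key x hx
  have hZcard : Z.card ≤ n :=
    le_trans (Multiset.toFinset_card_le _) (le_trans (card_roots' q0) hq0deg)
  set v : ℝ → ℝ := fun y => if hy : y ∈ Set.Icc (0:ℝ) 1 then (g - m) ⟨y, hy⟩ / d else 0 with hv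
  set sP : Polynomial ℝ := Lagrange.interpolate Z id v with hsP
  have hinj : Set.InjOn (id : ℝ → ℝ) Z := Set.injOn_id _
  have hsPdeg : sP.natDegree ≤ n := by
    rw [natDegree_le_iff_degree_le]
    have h1 := Lagrange.degree_interpolate_lt (s := Z) (v := id) v hinj
    have h2 : (Z.card : WithBot ℕ) ≤ (n : WithBot ℕ) := by exact_mod_cast hZcard
    exact le_of_lt (lt_of_lt_of_le h1 h2)
  have hsval : ∀ y : ℝ, y ∈ Z → sP.eval y = v y := fun y hy =>
    Lagrange.eval_interpolate_at_node v hinj hy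
  set sC : C(Set.Icc (0:ℝ) 1, ℝ) := sP.toContinuousMapOn (Set.Icc (0:ℝ) 1) with hsCdef
  have hsC : ∀ x : Set.Icc (0:ℝ) 1, sC x = sP.eval (x : ℝ) := fun x => rfl
  have hvx : ∀ x : Set.Icc (0:ℝ) 1, v (x:ℝ) = (g - m) x / d := by
    intro x
    rw [hv]
    simp only [x.2, dif_pos, Subtype.coe_eta]
  have hsE : ∀ x : Set.Icc (0:ℝ) 1, |(g - m) x| = d → sC x = (g - m) x / d := by
    intro x hx
    rw [hsC x, hsval _ (hmemZ x hx), hvx x]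
  have hprod : ∀ x : Set.Icc (0:ℝ) 1, |(g - m) x| = d → (g - m) x * sC x = d := by
    intro x hx
    rw [hsE x hx]
    have hsq : ((g - m) x)^2 = d^2 := by rw [← sq_abs, hx]
    rw [mul_div_assoc']
    rw [div_eq_iff (ne_of_gt hdpos')]
    linear_combination hsq
  set C0 : Set (Set.Icc (0:ℝ) 1) := {x | (g - m) x * sC x ≤ 0} with hC0
  have hC0closed : IsClosed C0 :=
    isClosed_le ((map_continuous (g - m)).mul (map_continuous sC)) continuous_const
  obtain ⟨d', hd'lt, hd'bound⟩ : ∃ d', d' < d ∧ ∀ x ∈ C0, |(g - m) x| ≤ d' := by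
    rcases C0.eq_empty_or_nonempty with hCe | hCe
    · exact ⟨0, hdpos', fun x hx => by rw [hCe] at hx; exact absurd hx (Set.notMem_empty x)⟩
    · obtain ⟨x1, hx1C, hx1max⟩ := hC0closed.isCompact.exists_isMaxOn hCe
        ((map_continuous (g - m)).abs.continuousOn)
      refine ⟨|(g - m) x1|, ?_, fun x hx => hx1max hx⟩
      rcases lt_or_eq_of_le ((abs_apply_le (g - m) x1).trans_eq hgm) with h | h
      · exact h
      · exfalso
        have h1 := hprod x1 h
        have h2 : (g - m) x1 * sC x1 ≤ 0 := hx1C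
        linarith
  set M : ℝ := ‖sC‖ + 1 with hM
  have hMpos : 0 < M := by positivity
  set ε : ℝ := min (d / (2 * M)) ((d - d') / (2 * M)) with hε
  have hεpos : 0 < ε :=
    lt_min (div_pos hdpos' (by positivity)) (div_pos (sub_pos.mpr hd'lt) (by positivity))
  have hεM1 : ε * M ≤ d / 2 := by
    calc ε * M ≤ (d / (2 * M)) * M := mul_le_mul_of_nonneg_right (min_le_left _ _) hMpos.le
      _ = d / 2 := by field_simp
  have hεM2 : ε * M ≤ (d - d') / 2 := by
    calc ε * M ≤ ((d - d') / (2 * M)) * M :=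
          mul_le_mul_of_nonneg_right (min_le_right _ _) hMpos.le
      _ = (d - d') / 2 := by field_simp
  set mε : C(Set.Icc (0:ℝ) 1, ℝ) := m + ε • sC with hmεdef
  clear_value d M ε mε
  have hmεmem : mε ∈ Pn n := by
    refine ⟨Pm + Polynomial.C ε * sP, le_trans (natDegree_add_le _ _)
      (max_le hPmdeg (le_trans (natDegree_C_mul_le _ _) hsPdeg)), fun x => ?_⟩
    simp only [hmεdef, ContinuousMap.add_apply, ContinuousMap.smul_apply, smul_eq_mul,
      eval_add, eval_mul, eval_C, hmeval x, hsC x]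
  obtain ⟨x2, hx2eq, -⟩ := norm_attained (g - mε)
  have hx2a : |(g - m) x2| ≤ d := hgm ▸ abs_apply_le (g - m) x2
  have hsb : |sC x2| ≤ M - 1 := by
    have := abs_apply_le sC x2
    rw [hM]; linarith
  have hpt : (g - mε) x2 = (g - m) x2 - ε * sC x2 := by
    simp [hmεdef]; ring
  have hlt : |(g - m) x2 - ε * sC x2| < d := by
    have hb1 : sC x2 ≤ M - 1 := le_of_abs_le hsb
    have hb2 : -(M - 1) ≤ sC x2 := neg_le_of_abs_le hsb
    have ha1 : (g - m) x2 ≤ d := le_of_abs_le hx2a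
    have ha2 : -d ≤ (g - m) x2 := neg_le_of_abs_le hx2a
    by_cases hc : x2 ∈ C0
    · have h1 := hd'bound x2 hc
      have h2 : |(g - m) x2 - ε * sC x2| ≤ |(g - m) x2| + ε * |sC x2| := by
        calc |(g - m) x2 - ε * sC x2| ≤ |(g - m) x2| + |ε * sC x2| := abs_sub _ _
          _ = |(g - m) x2| + ε * |sC x2| := by rw [abs_mul, abs_of_pos hεpos]
      have h3 : ε * |sC x2| ≤ ε * M := by
        apply mul_le_mul_of_nonneg_left _ hεpos.le
        linarith
      linarith [hεM2, hd'lt]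
    · have hc' : 0 < (g - m) x2 * sC x2 := lt_of_not_ge hc
      rw [abs_lt]
      rcases mul_pos_iff.mp hc' with ⟨hA, hB⟩ | ⟨hA, hB⟩
      · have h4 : ε * sC x2 ≤ ε * M := mul_le_mul_of_nonneg_left (by linarith) hεpos.le
        have h5 : 0 < ε * sC x2 := mul_pos hεpos hB
        constructor
        · linarith [hεM1, hdpos', hA]
        · linarith
      · have h4 : ε * sC x2 < 0 := mul_neg_of_pos_of_neg hεpos hB
        have h5 : ε * (-sC x2) ≤ ε * M := mul_le_mul_of_nonneg_left (by linarith) hεpos.le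
        constructor
        · linarith
        · linarith [hεM1, hdpos', hA]
  have hfinal : ‖g - mε‖ < d := by rw [hx2eq, hpt]; exact hlt
  have := hbp mε hmεmem
  linarith

lemma proj_combo (n : ℕ) (P : C(Set.Icc (0 : ℝ) 1, ℝ) → C(Set.Icc (0 : ℝ) 1, ℝ))
    (hP : ∀ g, P g ∈ Pn n ∧ ∀ r ∈ Pn n, ‖g - P g‖ ≤ ‖g - r‖)
    (f : C(Set.Icc (0 : ℝ) 1, ℝ)) (t : ℝ) (ht0 : 0 < t) (ht1 : t < 1) :
    P (f + t • (P f - f)) = P f := by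
  set p := P f with hp
  set g := f + t • (p - f) with hg
  have hgp : g - p = (1 - t) • (f - p) := by ext x; simp [hg]; ring
  have hfg : f - g = t • (f - p) := by ext x; simp [hg]; ring
  have hgpn : ‖g - p‖ = (1 - t) * ‖f - p‖ := by
    rw [hgp, norm_smul', abs_of_pos (by linarith)]
  have hfgn : ‖f - g‖ = t * ‖f - p‖ := by
    rw [hfg, norm_smul', abs_of_pos ht0]
  have hbest : ∀ q ∈ Pn n, ‖g - p‖ ≤ ‖g - q‖ := by
    intro q hq
    have h1 : ‖f - p‖ ≤ ‖f - q‖ := (hP f).2 q hq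
    have h2 : ‖f - q‖ ≤ ‖f - g‖ + ‖g - q‖ := by
      have : f - q = (f - g) + (g - q) := by abel
      rw [this]; exact norm_add_le _ _
    rw [hgpn]
    have hn : 0 ≤ ‖f - p‖ := norm_nonneg _
    nlinarith [hfgn]
  exact (best_unique n g p (P g) (hP f).1 (hP g).1 hbest (fun q hq => (hP g).2 q hq)).symm

/-- Let `P` be the metric projection of `C[0,1]` onto `𝒫ₙ`, `p = P f`, and let
`γ ∈ C*[0,1]` satisfy `⟨γ, f − p⟩ < 0`. Then `γ ∉ D̂*P(f)(μ)` for every `μ`. -/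
theorem stmt_17 (n : ℕ) (P : C(Set.Icc (0 : ℝ) 1, ℝ) → C(Set.Icc (0 : ℝ) 1, ℝ))
    (hP : ∀ g, P g ∈ Pn n ∧ ∀ r ∈ Pn n, ‖g - P g‖ ≤ ‖g - r‖)
    (f : C(Set.Icc (0 : ℝ) 1, ℝ))
    (γ : StrongDual ℝ C(Set.Icc (0 : ℝ) 1, ℝ))
    (hγ : γ (f - P f) < 0) :
    ∀ μ : StrongDual ℝ C(Set.Icc (0 : ℝ) 1, ℝ), ¬ inCoderiv P f μ γ := by
  intro μ hco
  unfold inCoderiv at hco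
  set p := P f with hp
  have hfp : f - p ≠ 0 := by
    intro h
    rw [h, map_zero] at hγ
    exact lt_irrefl 0 hγ
  have hd : 0 < ‖f - p‖ := norm_pos_iff.mpr hfp
  set d := ‖f - p‖ with hdd
  set c := γ (p - f) / d with hc
  have hγ' : γ (p - f) = - γ (f - p) := by
    rw [← map_neg]; congr 1; abel
  have hcpos : 0 < c := div_pos (by rw [hγ']; linarith) hd
  set u : C(Set.Icc (0 : ℝ) 1, ℝ) → ℝ :=
    fun g => (γ (g - f) - μ (P g - P f)) / (‖g - f‖ + ‖P g - P f‖) with hu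
  have hval : ∀ t : ℝ, 0 < t → t < 1 → u (f + t • (p - f)) = c := by
    intro t ht0 ht1
    have hPg : P (f + t • (p - f)) = p := proj_combo n P hP f t ht0 ht1
    have h1 : (f + t • (p - f)) - f = t • (p - f) := by abel
    have e1 : P (f + t • (p - f)) - P f = 0 := by rw [hPg, hp, sub_self]
    rw [hu]
    simp only [h1, e1, map_zero, norm_zero, add_zero, sub_zero]
    rw [map_smul, smul_eq_mul, norm_smul', abs_of_pos ht0, norm_sub_rev p f]
    rw [hc, ← hdd]
    rw [mul_div_mul_left _ _ (ne_of_gt ht0)]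
  have hfreq : ∃ᶠ g in nhdsWithin f {f}ᶜ, c ≤ u g := by
    have htend : Filter.Tendsto (fun t : ℝ => f + t • (p - f))
        (nhdsWithin 0 (Set.Ioo 0 1)) (nhdsWithin f {f}ᶜ) := by
      rw [tendsto_nhdsWithin_iff]
      constructor
      · have hcont : Continuous (fun t : ℝ => f + t • (p - f)) :=
          continuous_const.add (continuous_id.smul continuous_const)
        have := hcont.tendsto 0
        simp only [zero_smul, add_zero] at this
        exact this.mono_left nhdsWithin_le_nhds
      · filter_upwards [self_mem_nhdsWithin] with t ht
        simp only [Set.mem_compl_iff, Set.mem_singleton_iff]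
        intro habs
        have : t • (p - f) = 0 := by
          have := congrArg (· - f) habs
          simpa using this
        rcases smul_eq_zero.mp this with h | h
        · exact ne_of_gt ht.1 h
        · exact hfp (by rw [← neg_sub p f, h, neg_zero])
    have hne : (nhdsWithin (0:ℝ) (Set.Ioo 0 1)).NeBot := by
      rw [← mem_closure_iff_nhdsWithin_neBot, closure_Ioo (by norm_num : (0:ℝ) ≠ 1)]
      exact ⟨le_refl 0, by norm_num⟩
    apply htend.frequently
    apply Filter.Eventually.frequently
    filter_upwards [self_mem_nhdsWithin] with t ht
    exact (hval t ht.1 ht.2).ge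
  have hbdd : Filter.IsBoundedUnder (· ≤ ·) (nhdsWithin f {f}ᶜ) u := by
    refine ⟨‖γ‖ + ‖μ‖, Filter.eventually_map.mpr ?_⟩
    filter_upwards [self_mem_nhdsWithin] with g hg
    have hg' : g - f ≠ 0 := sub_ne_zero.mpr hg
    have hD : 0 < ‖g - f‖ + ‖P g - P f‖ :=
      add_pos_of_pos_of_nonneg (norm_pos_iff.mpr hg') (norm_nonneg _)
    rw [hu]
    rw [div_le_iff₀ hD]
    have h1 : γ (g - f) ≤ ‖γ‖ * ‖g - f‖ := by
      have := γ.le_opNorm (g - f)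
      rw [Real.norm_eq_abs] at this
      exact le_trans (le_abs_self _) this
    have h2 : -(μ (P g - P f)) ≤ ‖μ‖ * ‖P g - P f‖ := by
      have := μ.le_opNorm (P g - P f)
      rw [Real.norm_eq_abs] at this
      exact le_trans (neg_le_abs _) this
    have h3 : 0 ≤ ‖γ‖ * ‖P g - P f‖ := by positivity
    have h4 : 0 ≤ ‖μ‖ * ‖g - f‖ := by positivity
    nlinarith
  have hle := Filter.le_limsup_of_frequently_le hfreq hbdd
  have : c ≤ 0 := le_trans hle hco
  linarith
end

section
/- Let f ∈ C[0,1] with p = P_{𝒫ₙ}(f), and let μ ∈ C*[0,1] with ⟨μ, f⟩ ≠ 0. If γ ∈ 𝒫ₙ^⊥ (i.e., ⟨γ, q⟩ = 0 for every q ∈ 𝒫ₙ), then μ ∉ D̂*P_{𝒫ₙ}(f)(γ). Consequently, if μ itself lies in 𝒫ₙ^⊥ and ⟨μ, f⟩ ≠ 0, then μ is not a fixed point of the coderivative operator D̂*P_{𝒫ₙ}(f). -/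
section
open Filter Polynomial
namespace Stmt18Aux

abbrev XX := C(Set.Icc (0 : ℝ) 1, ℝ)

lemma Pn_smul {n : ℕ} {g : XX} (hg : g ∈ Pn n) (c : ℝ) : c • g ∈ Pn n := by
  obtain ⟨p, hp, he⟩ := hg
  refine ⟨Polynomial.C c * p, (natDegree_C_mul_le c p).trans hp, fun t => ?_⟩
  simp [he t]

lemma norm_smul' (c : ℝ) (x : XX) : ‖c • x‖ = |c| * ‖x‖ := by
  rw [norm_smul c x]; simp [Real.norm_eq_abs]

lemma exists_norm_apply_eq (h : XX) : ∃ t, |h t| = ‖h‖ := by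
  obtain ⟨t, -, ht⟩ := isCompact_univ.exists_isMaxOn
    ⟨(⟨0, by norm_num⟩ : Set.Icc (0:ℝ) 1), Set.mem_univ _⟩
    (h.continuous.abs.continuousOn : ContinuousOn (fun x => |h x|) Set.univ)
  refine ⟨t, le_antisymm (h.norm_coe_le_norm t) ?_⟩
  · exact (ContinuousMap.norm_le h (abs_nonneg _)).2 fun x => ht (Set.mem_univ x)

end Stmt18Aux

namespace Stmt18Aux

set_option maxHeartbeats 2000000 in
lemma unique_best {n : ℕ} {f p₁ p₂ : XX} (h₁ : p₁ ∈ Pn n) (h₂ : p₂ ∈ Pn n)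
    (hd : ∀ r ∈ Pn n, ‖f - p₁‖ ≤ ‖f - r‖) (e₂ : ‖f - p₂‖ = ‖f - p₁‖) : p₁ = p₂ := by
  by_contra hne
  set d : ℝ := ‖f - p₁‖ with hdd
  clear_value d
  have hd0 : 0 ≤ d := hdd ▸ norm_nonneg _
  rcases hd0.eq_or_lt with hd0' | hd0'
  · apply hne
    have e1 : f - p₁ = 0 := by rw [← norm_eq_zero, ← hdd, ← hd0']
    have e2 : f - p₂ = 0 := by rw [← norm_eq_zero, e₂, ← hd0']
    rw [← sub_eq_zero.1 e1, ← sub_eq_zero.1 e2]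
  · obtain ⟨q₁, hq₁, he₁⟩ := h₁
    obtain ⟨q₂, hq₂, he₂⟩ := h₂
    -- midpoint
    set p : XX := (2⁻¹ : ℝ) • (p₁ + p₂) with hp
    have hpmem : p ∈ Pn n := by
      refine ⟨Polynomial.C (2⁻¹:ℝ) * (q₁ + q₂), ?_, fun t => ?_⟩
      · exact (natDegree_C_mul_le _ _).trans ((natDegree_add_le _ _).trans (by simp [hq₁, hq₂]))
      · simp [hp, he₁ t, he₂ t]; ring
    have hq : q₁ - q₂ ≠ 0 := by
      intro h0
      apply hne
      ext t
      rw [he₁ t, he₂ t, sub_eq_zero.1 h0]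
    have hqdeg : (q₁ - q₂).natDegree ≤ n := (natDegree_sub_le _ _).trans (by simp [hq₁, hq₂])
    -- ‖f - p‖ = d
    have hfp : f - p = (2⁻¹ : ℝ) • ((f - p₁) + (f - p₂)) := by
      rw [hp]; module
    have hple : ‖f - p‖ ≤ d := by
      rw [hfp]
      calc ‖(2⁻¹ : ℝ) • ((f - p₁) + (f - p₂))‖ ≤ 2⁻¹ * (‖f - p₁‖ + ‖f - p₂‖) := by
            refine (norm_smul_le (2⁻¹ : ℝ) ((f - p₁) + (f - p₂))).trans ?_
            gcongr
            · simp [Real.norm_eq_abs]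
            · exact norm_add_le _ _
        _ ≤ d := by rw [e₂, ← hdd]; ring_nf; norm_num
    have hpd : ‖f - p‖ = d := le_antisymm hple (hd p hpmem)
    -- points where the max is attained give roots of q₁ - q₂
    have hroot : ∀ t : Set.Icc (0:ℝ) 1, |(f - p) t| = d → (f - p₁) t = (f - p₂) t := by
      intro t ht
      have ha : |(f - p₁) t| ≤ d := by rw [hdd]; exact (f - p₁).norm_coe_le_norm t
      have hb : |(f - p₂) t| ≤ d := by rw [← e₂]; exact (f - p₂).norm_coe_le_norm t
      have hab : (f - p) t = 2⁻¹ * ((f - p₁) t + (f - p₂) t) := by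
        simp [hp, ContinuousMap.sub_apply, ContinuousMap.smul_apply, ContinuousMap.add_apply]
        ring
      rw [hab] at ht
      rcases abs_cases ((f - p₁) t) with ⟨ha1, _⟩ | ⟨ha1, _⟩ <;>
        rcases abs_cases ((f - p₂) t) with ⟨hb1, _⟩ | ⟨hb1, _⟩ <;>
        rcases abs_cases (2⁻¹ * ((f - p₁) t + (f - p₂) t)) with ⟨hc1, _⟩ | ⟨hc1, _⟩ <;>
        linarith [ha, hb, ht]
    set q : Polynomial ℝ := q₁ - q₂ with hqdef
    have hEroot : ∀ t : Set.Icc (0:ℝ) 1, |(f - p) t| = d → (t : ℝ) ∈ q.roots.toFinset := by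
      intro t ht
      have := hroot t ht
      simp only [ContinuousMap.sub_apply] at this
      rw [he₁ t, he₂ t] at this
      rw [Multiset.mem_toFinset, mem_roots hq]
      simp only [IsRoot, hqdef, eval_sub]
      linarith
    set Z : Finset ℝ := q.roots.toFinset with hZ
    have hZcard : Z.card ≤ n := (q.roots.toFinset_card_le).trans ((q.card_roots').trans hqdeg)
    -- interpolant
    set w : ℝ → ℝ := fun x => if hx : x ∈ Set.Icc (0:ℝ) 1 then (f - p) ⟨x, hx⟩ else 0 with hw
    set r : Polynomial ℝ := Lagrange.interpolate Z id w with hr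
    have hrdeg : r.natDegree ≤ n := by
      refine natDegree_le_iff_degree_le.2 (le_of_lt (lt_of_lt_of_le
        (Lagrange.degree_interpolate_lt w (Function.injective_id.injOn)) ?_))
      exact_mod_cast Nat.cast_le.2 hZcard
    set rC : XX := r.toContinuousMapOn (Set.Icc (0:ℝ) 1) with hrC
    have hrE : ∀ t : Set.Icc (0:ℝ) 1, |(f - p) t| = d → rC t = (f - p) t := by
      intro t ht
      have hmem := hEroot t ht
      have := Lagrange.eval_interpolate_at_node w (Function.injective_id.injOn) hmem
      simp only [id_eq] at this
      have : rC t = w (t : ℝ) := this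
      rw [this, hw]
      simp [t.2]
    -- the open set where (f-p)·rC is large
    set h : XX := f - p with hh
    set V : Set (Set.Icc (0:ℝ) 1) := {t | d^2/2 < h t * rC t} with hV
    have hVopen : IsOpen V := isOpen_lt continuous_const (h.continuous.mul rC.continuous)
    have hEV : ∀ t, |h t| = d → t ∈ V := by
      intro t ht
      have := hrE t ht
      simp only [hV, Set.mem_setOf_eq, this]
      have : h t * h t = d ^ 2 := by
        have := sq_abs (h t)
        rw [ht] at this
        nlinarith [this]
      nlinarith [this, hd0']
    -- bound off V
    have hK : ∃ d' : ℝ, d' < d ∧ ∀ t ∈ Vᶜ, |h t| ≤ d' := by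
      rcases Set.eq_empty_or_nonempty Vᶜ with hVc | hVc
      · exact ⟨0, hd0', by simp [hVc]⟩
      · obtain ⟨t₁, ht₁K, ht₁⟩ := (hVopen.isClosed_compl.isCompact).exists_isMaxOn hVc
          (h.continuous.abs.continuousOn)
        refine ⟨|h t₁|, ?_, fun t htK => ht₁ htK⟩
        rcases lt_or_eq_of_le ((h.norm_coe_le_norm t₁).trans_eq hpd) with hlt | heq
        · exact hlt
        · exact absurd (hEV t₁ heq) ht₁K
    obtain ⟨d', hd'lt, hd'⟩ := hK
    clear_value rC h r w Z q
    -- choose epsilon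
    set R : ℝ := ‖rC‖ + 1 with hR
    clear_value R
    have hR0 : 0 < R := by rw [hR]; positivity
    have hrCle : ‖rC‖ ≤ R := by simp [hR]
    set ε : ℝ := min ((d - d') / (2*R)) (d^2 / (2*R^2)) with hε
    clear_value ε
    have hdd' : 0 < d - d' := sub_pos.2 hd'lt
    have hε0 : 0 < ε := by
      rw [hε]; apply lt_min <;> positivity
    have h2R : (0:ℝ) < 2 * R := by positivity
    have h2R2 : (0:ℝ) < 2 * R^2 := by positivity
    have heR : 0 < ε * R := mul_pos hε0 hR0
    have heR2 : 0 < ε * R^2 := by positivity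
    have hε1 : ε * R < d - d' := by
      have hεle : ε ≤ (d - d') / (2*R) := by rw [hε]; exact min_le_left _ _
      have e1 : ε * (2 * R) ≤ d - d' := (le_div_iff₀ h2R).1 hεle
      ring_nf at e1 ⊢
      linarith
    have hε2 : ε * R^2 < d^2 := by
      have hεle : ε ≤ d^2 / (2*R^2) := by rw [hε]; exact min_le_right _ _
      have e2 : ε * (2 * R^2) ≤ d^2 := (le_div_iff₀ h2R2).1 hεle
      ring_nf at e2 heR2 ⊢
      linarith
    -- the perturbed polynomial
    set p' : XX := p + ε • rC with hp'
    clear_value p' p V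
    have hp'mem : p' ∈ Pn n := by
      obtain ⟨qm, hqm, hqme⟩ := hpmem
      refine ⟨qm + Polynomial.C ε * r, ?_, fun t => ?_⟩
      · exact (natDegree_add_le _ _).trans (max_le hqm ((natDegree_C_mul_le _ _).trans hrdeg))
      · have hrct : rC t = r.eval (t:ℝ) := by rw [hrC]; rfl
        rw [hp']
        simp [ContinuousMap.add_apply, ContinuousMap.smul_apply, hqme t, hrct,
          eval_add, eval_mul, eval_C, smul_eq_mul]
    have hcontra : ‖f - p'‖ < d := by
      rw [ContinuousMap.norm_lt_iff _ hd0']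
      intro t
      have hfp' : (f - p') t = h t - ε * rC t := by
        simp [hp', hh, ContinuousMap.sub_apply, ContinuousMap.add_apply,
          ContinuousMap.smul_apply]
        ring
      rw [hfp', Real.norm_eq_abs]
      have hhle : |h t| ≤ d := (h.norm_coe_le_norm t).trans_eq hpd
      have hrCt : |rC t| ≤ ‖rC‖ := rC.norm_coe_le_norm t
      by_cases htV : t ∈ V
      · have hψ : d^2/2 < h t * rC t := by rw [hV] at htV; exact htV
        have hx2 : (h t)^2 ≤ d^2 := by nlinarith [sq_abs (h t), hhle, abs_nonneg (h t)]
        have hy2 : (rC t)^2 ≤ R^2 := by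
          nlinarith [sq_abs (rC t), hrCt.trans hrCle, abs_nonneg (rC t), hR0]
        have hsq : (h t - ε * rC t)^2 < d^2 := by
          have e1 : ε * (d^2/2) < ε * (h t * rC t) := mul_lt_mul_of_pos_left hψ hε0
          have e2 : ε*ε*((rC t)^2) ≤ ε*ε*R^2 := mul_le_mul_of_nonneg_left hy2 (by positivity)
          have e3 : ε*(ε*R^2) < ε*d^2 := mul_lt_mul_of_pos_left hε2 hε0
          nlinarith [e1, e2, e3, hx2]
        exact abs_lt_of_sq_lt_sq hsq hd0'.le
      · have := hd' t htV
        have : |h t - ε * rC t| ≤ |h t| + ε * |rC t| := by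
          refine (abs_sub _ _).trans ?_
          rw [abs_mul, abs_of_pos hε0]
        have hεrc : ε * |rC t| ≤ ε * R := by
          refine mul_le_mul_of_nonneg_left (hrCt.trans hrCle) hε0.le
        linarith [hd' t htV]
    exact absurd (hd p' hp'mem) (not_le.2 hcontra)

end Stmt18Aux

namespace Stmt18Aux

set_option maxHeartbeats 1000000 in
theorem stmt_18' (n : ℕ) (P : C(Set.Icc (0 : ℝ) 1, ℝ) → C(Set.Icc (0 : ℝ) 1, ℝ))
    (hP : ∀ g, P g ∈ Pn n ∧ ∀ r ∈ Pn n, ‖g - P g‖ ≤ ‖g - r‖)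
    (f : C(Set.Icc (0 : ℝ) 1, ℝ))
    (μ : StrongDual ℝ C(Set.Icc (0 : ℝ) 1, ℝ)) (hμf : μ f ≠ 0)
    (γ : StrongDual ℝ C(Set.Icc (0 : ℝ) 1, ℝ)) (hγ : ∀ q ∈ Pn n, γ q = 0) :
    ¬ Filter.limsup
      (fun g => (μ (g - f) - γ (P g - P f)) / (‖g - f‖ + ‖P g - P f‖))
      (nhdsWithin f {f}ᶜ) ≤ 0 := by
  intro hco
  have hPfmem := (hP f).1
  have hf0 : f ≠ 0 := fun h => hμf (by simp [h])
  have hnf : 0 < ‖f‖ := norm_pos_iff.2 hf0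
  set Q : XX → ℝ := fun g => (μ (g - f) - γ (P g - P f)) / (‖g - f‖ + ‖P g - P f‖) with hQ
  set c : ℝ := |μ f| / (‖f‖ + ‖P f‖) with hc
  have hc0 : 0 < c := div_pos (abs_pos.2 hμf) (by positivity)
  set s : ℝ := if 0 < μ f then 1 else -1 with hs
  have hsμ : s * μ f = |μ f| := by
    rw [hs]
    split_ifs with hpos
    · rw [abs_of_pos hpos]; ring
    · rw [abs_of_neg (lt_of_le_of_ne (not_lt.1 hpos) hμf)]; ring
  have habs : |s| = 1 := by
    rw [hs]; split_ifs <;> simp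
  -- key computation
  have key : ∀ t : ℝ, t ∈ Set.Ioo (0:ℝ) 1 → Q ((1 + t*s) • f) = c := by
    intro t ht
    obtain ⟨ht0, ht1⟩ := ht
    have hts : |t * s| = t := by rw [abs_mul, habs, abs_of_pos ht0, mul_one]
    have hc1 : 0 < 1 + t*s := by
      rcases abs_le.1 (le_of_eq hts) with ⟨h1, h2⟩
      linarith
    set g : XX := (1 + t*s) • f with hg
    -- P g = (1+ts) • P f
    have hPg : P g = (1 + t*s) • P f := by
      have hmem₂ : (1 + t*s)⁻¹ • P g ∈ Pn n := Pn_smul (hP g).1 _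
      have heq : P f = (1 + t*s)⁻¹ • P g := by
        refine unique_best hPfmem hmem₂ (hP f).2 ?_
        have h1 : g - (1 + t*s) • P f = (1 + t*s) • (f - P f) := by rw [hg]; module
        have h2 : g - P g = (1 + t*s) • (f - (1 + t*s)⁻¹ • P g) := by
          rw [hg, smul_sub, smul_inv_smul₀ hc1.ne']
        have hA : ‖g - P g‖ ≤ ‖g - (1 + t*s) • P f‖ :=
          (hP g).2 _ (Pn_smul hPfmem _)
        rw [h1, h2] at hA
        rw [norm_smul', norm_smul', abs_of_pos hc1] at hA
        have hB := hA
        have hge : ‖f - P f‖ ≤ ‖f - (1 + t*s)⁻¹ • P g‖ :=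
          (hP f).2 _ (Pn_smul (hP g).1 _)
        have := (mul_le_mul_iff_right₀ hc1).1 hB
        linarith
      rw [heq, smul_inv_smul₀ hc1.ne']
    have hgf : g - f = (t*s) • f := by rw [hg]; module
    have hPgf : P g - P f = (t*s) • P f := by rw [hPg]; module
    have hn1 : ‖g - f‖ = t * ‖f‖ := by rw [hgf, norm_smul', hts]
    have hn2 : ‖P g - P f‖ = t * ‖P f‖ := by rw [hPgf, norm_smul', hts]
    have hnum1 : μ (g - f) = t * |μ f| := by
      rw [hgf, map_smul, smul_eq_mul, ← hsμ]; ring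
    have hnum2 : γ (P g - P f) = 0 := by
      rw [hPgf, map_smul, smul_eq_mul, hγ (P f) hPfmem, mul_zero]
    rw [hQ]
    simp only [hnum1, hnum2, hn1, hn2, sub_zero]
    rw [hc, ← mul_add, mul_div_mul_left _ _ ht0.ne']
  -- the curve tends to f within the punctured neighborhood
  have hT : Filter.Tendsto (fun t : ℝ => (1 + t*s) • f) (nhdsWithin 0 (Set.Ioi 0))
      (nhdsWithin f {f}ᶜ) := by
    apply tendsto_nhdsWithin_of_tendsto_nhds_of_eventually_within
    · have h1 : Filter.Tendsto (fun t : ℝ => 1 + t*s) (nhdsWithin 0 (Set.Ioi 0)) (nhds 1) := by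
        have : Filter.Tendsto (fun t : ℝ => 1 + t*s) (nhds 0) (nhds (1 + 0*s)) := by
          exact (continuous_const.add (continuous_id.mul continuous_const)).tendsto 0
        simpa using this.mono_left nhdsWithin_le_nhds
      have := h1.smul (tendsto_const_nhds (x := f) (f := nhdsWithin (0:ℝ) (Set.Ioi 0)))
      simpa using this
    · filter_upwards [self_mem_nhdsWithin] with t ht
      intro hEq
      simp only [Set.mem_Ioi] at ht
      have : ((1 + t*s) - 1) • f = 0 := by
        rw [sub_smul, one_smul, hEq]; simp
      have hts0 : (1 + t*s) - 1 ≠ 0 := by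
        have : t * s ≠ 0 := fun h0 => by
          rcases mul_eq_zero.1 h0 with h | h
          · exact ht.ne' h
          · rw [hs] at h; revert h; split_ifs <;> norm_num
        simpa using this
      rcases smul_eq_zero.1 this with h | h
      · exact hts0 h
      · exact hf0 h
  have hfreq : ∃ᶠ g in nhdsWithin f {f}ᶜ, c ≤ Q g := by
    refine hT.frequently ?_
    refine Filter.Eventually.frequently ?_
    filter_upwards [Ioo_mem_nhdsGT_of_mem (Set.mem_Ico.2 ⟨le_rfl, zero_lt_one⟩)] with t ht
    exact (key t ht).ge
  have hbdd : Filter.IsBoundedUnder (· ≤ ·) (nhdsWithin f {f}ᶜ) Q := by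
    refine Filter.isBoundedUnder_of ⟨‖μ‖ + ‖γ‖, fun g => ?_⟩
    rw [hQ]
    set a := ‖g - f‖ with ha
    set b := ‖P g - P f‖ with hb
    have ha0 : 0 ≤ a := norm_nonneg _
    have hb0 : 0 ≤ b := norm_nonneg _
    have hnum : μ (g - f) - γ (P g - P f) ≤ (‖μ‖ + ‖γ‖) * (a + b) := by
      have h1 : μ (g - f) ≤ ‖μ‖ * a := by
        calc μ (g - f) ≤ |μ (g - f)| := le_abs_self _
          _ ≤ ‖μ‖ * a := μ.le_opNorm _
      have h2 : -γ (P g - P f) ≤ ‖γ‖ * b := by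
        calc -γ (P g - P f) ≤ |γ (P g - P f)| := neg_le_abs _
          _ ≤ ‖γ‖ * b := γ.le_opNorm _
      nlinarith [norm_nonneg μ, norm_nonneg γ]
    rcases (add_nonneg ha0 hb0).eq_or_lt with hD | hD
    · have hD' : ‖g - f‖ + ‖P g - P f‖ = 0 := by linarith
      show (μ (g - f) - γ (P g - P f)) / (‖g - f‖ + ‖P g - P f‖) ≤ ‖μ‖ + ‖γ‖
      rw [hD', div_zero]; positivity
    · exact (div_le_iff₀ hD).2 hnum
  have hle : c ≤ Filter.limsup Q (nhdsWithin f {f}ᶜ) :=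
    Filter.le_limsup_of_frequently_le hfreq hbdd
  exact absurd (hle.trans hco) (not_le.2 hc0)

end Stmt18Aux

end

/-- Let `P` be the metric projection of `C[0,1]` onto `𝒫ₙ` and `μ ∈ C*[0,1]` with
`⟨μ, f⟩ ≠ 0`. Then (i) for every `γ ∈ 𝒫ₙ^⊥` we have `μ ∉ D̂*P(f)(γ)`; and (ii) if
moreover `μ ∈ 𝒫ₙ^⊥`, then `μ` is not a fixed point of `D̂*P(f)`. -/
theorem stmt_18 (n : ℕ) (P : C(Set.Icc (0 : ℝ) 1, ℝ) → C(Set.Icc (0 : ℝ) 1, ℝ))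
    (hP : ∀ g, P g ∈ Pn n ∧ ∀ r ∈ Pn n, ‖g - P g‖ ≤ ‖g - r‖)
    (f : C(Set.Icc (0 : ℝ) 1, ℝ))
    (μ : StrongDual ℝ C(Set.Icc (0 : ℝ) 1, ℝ)) (hμf : μ f ≠ 0) :
    (∀ γ : StrongDual ℝ C(Set.Icc (0 : ℝ) 1, ℝ),
        (∀ q ∈ Pn n, γ q = 0) → ¬ inCoderiv P f γ μ) ∧
      ((∀ q ∈ Pn n, μ q = 0) → ¬ inCoderiv P f μ μ) := by
  constructor
  · intro γ hγ h
    exact Stmt18Aux.stmt_18' n P hP f μ hμf γ hγ h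
  · intro hμ h
    exact Stmt18Aux.stmt_18' n P hP f μ hμf μ hμ h
end
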